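/- Let E be a Hausdorff locally convex real topological vector space and A ⊆ E with 0 ∈ A. Then for every x ∈ E, the Minkowski gauge of the closed convex hull of A equals the convex envelope of the Minkowski gauge of A: 𝒟_{cl(conv A)}(x) = sup {g(x) : g : E → ℝ continuous affine with g(y) ≤ 𝒟_A(y) for all y ∈ E}. -/

import Mathlib

open ENNReal

/-- The Minkowski gauge of a set `A` in a real vector space, with values in `[0,∞]`
(the infimum of the empty set being `∞`). -/
noncomputable def mgauge {E : Type*} [AddCommGroup E] [Module ℝ E] (A : Set E) (x : E) : ℝ≥0∞ :=
  sInf {r : ℝ≥0∞ | ∃ m : ℝ, 0 < m ∧ m⁻¹ • x ∈ A ∧ r = ENNReal.ofReal m}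

/-- The Minkowski gauge of the closed convex hull of `A` equals the convex envelope of the
Minkowski gauge of `A`, i.e. the pointwise supremum of all continuous affine functions
(of the form `y ↦ f y + c` with `f` continuous linear) dominated by `mgauge A`. -/
theorem stmt_5 {E : Type*} [TopologicalSpace E] [AddCommGroup E] [Module ℝ E]
    [IsTopologicalAddGroup E] [ContinuousSMul ℝ E] [LocallyConvexSpace ℝ E] [T2Space E]
    (A : Set E) (h0 : (0 : E) ∈ A) (x : E) :
    mgauge (closure (convexHull ℝ A)) x =
      ⨆ f : E →L[ℝ] ℝ, ⨆ c : ℝ,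
        ⨆ _ : ∀ y : E, ENNReal.ofReal (f y + c) ≤ mgauge A y,
          ENNReal.ofReal (f x + c) := by
  set B := closure (convexHull ℝ A) with hBdef
  have hBconv : Convex ℝ B := (convex_convexHull ℝ A).closure
  have hBclosed : IsClosed B := isClosed_closure
  have hAB : A ⊆ B := (subset_convexHull ℝ A).trans subset_closure
  have h0B : (0 : E) ∈ B := hAB h0
  apply le_antisymm
  · -- LHS ≤ RHS via separation
    apply ENNReal.le_of_forall_nnreal_lt
    intro r hr
    rcases eq_or_lt_of_le (zero_le (a := r)) with hr0 | hr0
    · -- r = 0 : RHS ≥ 0 trivially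
      simp [← hr0]
    · have hr0' : (0 : ℝ) < (r : ℝ) := hr0
      have hrx : ((r : ℝ))⁻¹ • x ∉ B := by
        intro hx
        refine absurd hr (not_lt.2 (sInf_le ?_))
        exact ⟨(r : ℝ), hr0', hx, by simp⟩
      obtain ⟨f, u, hfu, hux⟩ := geometric_hahn_banach_closed_point hBconv hBclosed hrx
      have hu : (0 : ℝ) < u := by simpa using hfu 0 h0B
      set g : E →L[ℝ] ℝ := u⁻¹ • f with hgdef
      have hgB : ∀ b ∈ B, g b ≤ 1 := by
        intro b hb
        have hb' := (hfu b hb).le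
        have : u⁻¹ * f b ≤ u⁻¹ * u :=
          mul_le_mul_of_nonneg_left hb' (inv_nonneg.2 hu.le)
        simpa [hgdef, inv_mul_cancel₀ hu.ne'] using this
      have hgx : (r : ℝ) < g x := by
        have h1 : u < (r : ℝ)⁻¹ * f x := by
          simpa [map_smul, smul_eq_mul] using hux
        have h2 : u * (r : ℝ) < f x := by
          have h3 := mul_lt_mul_of_pos_left h1 hr0'
          rw [← mul_assoc, mul_inv_cancel₀ hr0'.ne', one_mul] at h3
          linarith
        have : u⁻¹ * (u * (r : ℝ)) < u⁻¹ * f x :=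
          mul_lt_mul_of_pos_left h2 (inv_pos.2 hu)
        simpa [hgdef, ← mul_assoc, inv_mul_cancel₀ hu.ne'] using this
      have hcond : ∀ y : E, ENNReal.ofReal (g y + 0) ≤ mgauge A y := by
        intro y
        apply le_sInf
        rintro s ⟨m, hm, hmy, rfl⟩
        apply ENNReal.ofReal_le_ofReal
        have h1 : g (m⁻¹ • y) ≤ 1 := hgB _ (hAB hmy)
        rw [map_smul, smul_eq_mul] at h1
        have : m * (m⁻¹ * g y) ≤ m * 1 := mul_le_mul_of_nonneg_left h1 hm.le
        rw [← mul_assoc, mul_inv_cancel₀ hm.ne', one_mul, mul_one] at this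
        linarith
      calc (r : ℝ≥0∞) = ENNReal.ofReal (r : ℝ) := ENNReal.ofReal_coe_nnreal.symm
        _ ≤ ENNReal.ofReal (g x + 0) := ENNReal.ofReal_le_ofReal (by linarith)
        _ ≤ _ := by
          refine le_iSup_of_le g ?_
          refine le_iSup_of_le (0:ℝ) ?_
          exact le_iSup_of_le hcond le_rfl
  · -- RHS ≤ LHS
    refine iSup_le fun f => iSup_le fun c => iSup_le fun hfc => ?_
    have key : ∀ a ∈ A, ∀ t : ℝ, 0 < t → t * f a + c ≤ t := by
      intro a ha t ht
      have h1 : mgauge A (t • a) ≤ ENNReal.ofReal t := by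
        apply sInf_le
        exact ⟨t, ht, by simp [smul_smul, inv_mul_cancel₀ ht.ne', ha], rfl⟩
      have h2 := (hfc (t • a)).trans h1
      rw [ENNReal.ofReal_le_ofReal_iff ht.le] at h2
      simpa [map_smul, smul_eq_mul] using h2
    have hc : c ≤ 0 := by
      refine le_of_forall_pos_le_add fun ε hε => ?_
      have := key 0 h0 ε hε
      simpa using this
    have hf1 : ∀ a ∈ A, f a ≤ 1 := by
      intro a ha
      refine le_of_forall_pos_le_add fun ε hε => ?_
      set t : ℝ := max 1 (-c / ε) with htdef
      have ht : (0 : ℝ) < t := lt_of_lt_of_le one_pos (le_max_left _ _)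
      have hkey := key a ha t ht
      have htc : -c ≤ ε * t := by
        have h1 : -c / ε ≤ t := le_max_right _ _
        have := mul_le_mul_of_nonneg_left h1 hε.le
        rwa [mul_div_cancel₀ _ hε.ne'] at this
      nlinarith
    have hf1B : ∀ b ∈ B, f b ≤ 1 := by
      have hconvset : Convex ℝ {z : E | f z ≤ 1} :=
        convex_halfSpace_le ⟨f.map_add, f.map_smul⟩ 1
      have hclosedset : IsClosed {z : E | f z ≤ 1} :=
        isClosed_le f.continuous continuous_const
      have h1 : convexHull ℝ A ⊆ {z : E | f z ≤ 1} := convexHull_min hf1 hconvset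
      intro b hb
      exact closure_minimal h1 hclosedset hb
    apply le_sInf
    rintro s ⟨m, hm, hmx, rfl⟩
    apply ENNReal.ofReal_le_ofReal
    have h1 : f (m⁻¹ • x) ≤ 1 := hf1B _ hmx
    rw [map_smul, smul_eq_mul] at h1
    have h2 : m * (m⁻¹ * f x) ≤ m * 1 := mul_le_mul_of_nonneg_left h1 hm.le
    rw [← mul_assoc, mul_inv_cancel₀ hm.ne', one_mul, mul_one] at h2
    linarith
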